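/- Let (A,·,α) be a regular finite-dimensional Hom-pre-Lie algebra and r ∈ A⊗A a Hom-s-matrix. Equip A* with the product ξ∘η = ad^⋆_{r^♯(ξ)}η − R^⋆_{r^♯(η)}ξ, so that (A*,∘,(α^{-1})*) is a Hom-pre-Lie algebra. Then (A, A*, φ*, ψ*) is a Hom-pre-Lie bialgebra, where ⟨φ*(x), ξ⊗η⟩ = ⟨x, ξ∘η⟩ (equivalently φ*(x) = (L^{-2}_x⊗α + α⊗ad^{-2}_x)(r)) and ⟨ψ*(ξ), x⊗y⟩ = ⟨ξ, x·y⟩. -/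

import Mathlib

open TensorProduct LinearMap Module

/-- Port helper: in current Lean/Mathlib, instance search no longer finds
`LinearMap.addCommGroup` for three-fold iterated linear maps into the scalar field
(a stuck instance metavariable for `AddCommGroup K`); this supplies exactly that instance. -/
instance addCommGroupLinDualH {K W X Y : Type*} [Field K] [AddCommGroup W] [Module K W]
    [AddCommGroup X] [Module K X] [AddCommGroup Y] [Module K Y] :
    AddCommGroup (W →ₗ[K] X →ₗ[K] Y →ₗ[K] K) :=
  @LinearMap.addCommGroup _ _ _ _ _ _ _ (@LinearMap.addCommGroup _ _ _ _ _ _ _ LinearMap.addCommGroup _ _ _) _ _ _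

section Defs

variable {K : Type*} [Field K]

section Basic
variable {A : Type*} [AddCommGroup A] [Module K A]
variable {B : Type*} [AddCommGroup B] [Module K B]
variable {V : Type*} [AddCommGroup V] [Module K V]

/-- A Hom-pre-Lie algebra structure. -/
def IsHomPreLie (m : A →ₗ[K] A →ₗ[K] A) (α : A →ₗ[K] A) : Prop :=
  (∀ x y, α (m x y) = m (α x) (α y)) ∧
  ∀ x y z, m (m x y) (α z) - m (α x) (m y z) = m (m y x) (α z) - m (α y) (m x z)

/-- A Hom-Lie algebra structure. -/
def IsHomLie (br : A →ₗ[K] A →ₗ[K] A) (φ : A →ₗ[K] A) : Prop :=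
  (∀ x y, br x y = - br y x) ∧
  (∀ x y, φ (br x y) = br (φ x) (φ y)) ∧
  ∀ x y z, br (φ x) (br y z) + br (φ y) (br z x) + br (φ z) (br x y) = 0

/-- A representation of a Hom-Lie algebra on `V` with respect to `β`. -/
def IsHomLieRep (br : A →ₗ[K] A →ₗ[K] A) (φ : A →ₗ[K] A)
    (β : Module.End K V) (ρ : A →ₗ[K] Module.End K V) : Prop :=
  (∀ x, ρ (φ x) * β = β * ρ x) ∧
  ∀ x y, ρ (br x y) * β = ρ (φ x) * ρ y - ρ (φ y) * ρ x

/-- A representation of a Hom-pre-Lie algebra on `V` with respect to `β`. -/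
def IsHomPreLieRep (m : A →ₗ[K] A →ₗ[K] A) (α : A →ₗ[K] A)
    (β : Module.End K V) (ρ μ : A →ₗ[K] Module.End K V) : Prop :=
  IsHomLieRep (m - m.flip) α β ρ ∧
  (∀ x, β * μ x = μ (α x) * β) ∧
  ∀ x y, μ (α y) * μ x - μ (m x y) * β = μ (α y) * ρ x - ρ (α x) * μ y

/-- A 1-cocycle of a Hom-Lie algebra with respect to a representation. -/
def IsHomLieCocycle (br : A →ₗ[K] A →ₗ[K] A) (φ : A →ₗ[K] A)
    (ρ : A →ₗ[K] Module.End K V) (δ : A →ₗ[K] V) : Prop :=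
  ∀ x y, δ (br x y) = ρ (φ x) (δ y) - ρ (φ y) (δ x)

/-- A matched pair of Hom-Lie algebras. -/
def IsHomLieMatchedPair (brA : A →ₗ[K] A →ₗ[K] A) (φA : A →ₗ[K] A)
    (brB : B →ₗ[K] B →ₗ[K] B) (φB : B →ₗ[K] B)
    (ρ : A →ₗ[K] Module.End K B) (ρ' : B →ₗ[K] Module.End K A) : Prop :=
  IsHomLie brA φA ∧ IsHomLie brB φB ∧
  IsHomLieRep brA φA φB ρ ∧ IsHomLieRep brB φB φA ρ' ∧
  (∀ x y x', ρ' (φB x') (brA x y) =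
    brA (ρ' x' x) (φA y) + brA (φA x) (ρ' x' y) + ρ' (ρ y x') (φA x) - ρ' (ρ x x') (φA y)) ∧
  ∀ x x' y', ρ (φA x) (brB x' y') =
    brB (ρ x x') (φB y') + brB (φB x') (ρ x y') + ρ (ρ' y' x) (φB x') - ρ (ρ' x' x) (φB y')

/-- A matched pair of Hom-pre-Lie algebras. -/
def IsHomPreLieMatchedPair (mA : A →ₗ[K] A →ₗ[K] A) (αA : A →ₗ[K] A)
    (mB : B →ₗ[K] B →ₗ[K] B) (αB : B →ₗ[K] B)
    (lA rA : A →ₗ[K] Module.End K B) (lB rB : B →ₗ[K] Module.End K A) : Prop :=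
  IsHomPreLie mA αA ∧ IsHomPreLie mB αB ∧
  IsHomPreLieRep mA αA αB lA rA ∧ IsHomPreLieRep mB αB αA lB rB ∧
  (∀ (x : A) (a b : B), rA (αA x) (mB a b - mB b a) =
    rA (lB b x) (αB a) - rA (lB a x) (αB b) + mB (αB a) (rA x b) - mB (αB b) (rA x a)) ∧
  (∀ (x : A) (a b : B), lA (αA x) (mB a b) =
    -(lA (lB a x - rB a x) (αB b)) + mB (lA x a - rA x a) (αB b)
      + rA (rB b x) (αB a) + mB (αB a) (lA x b)) ∧
  (∀ (a : B) (x y : A), rB (αB a) (mA x y - mA y x) =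
    rB (lA y a) (αA x) - rB (lA x a) (αA y) + mA (αA x) (rB a y) - mA (αA y) (rB a x)) ∧
  ∀ (a : B) (x y : A), lB (αB a) (mA x y) =
    -(lB (lA x a - rA x a) (αA y)) + mA (lB a x - rB a x) (αA y)
      + rB (rA y a) (αA x) + mA (αA x) (lB a y)

/-- A Hom-L-dendriform algebra structure. -/
def IsHomLDendriform (tr tl : A →ₗ[K] A →ₗ[K] A) (α : A →ₗ[K] A) : Prop :=
  (∀ x y, α (tr x y) = tr (α x) (α y)) ∧
  (∀ x y, α (tl x y) = tl (α x) (α y)) ∧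
  (∀ x y z, tr (tr x y) (α z) + tr (tl x y) (α z) + tr (α y) (tr x z)
      - tr (tl y x) (α z) - tr (tr y x) (α z) - tr (α x) (tr y z) = 0) ∧
  ∀ x y z, tl (tr x y) (α z) + tl (α y) (tr x z) + tl (α y) (tl x z)
      - tl (tl y x) (α z) - tr (α x) (tl y z) = 0

/-- A Hom-O-operator on a Hom-pre-Lie algebra with respect to a representation. -/
def IsHomOOperator (m : A →ₗ[K] A →ₗ[K] A) (α : A →ₗ[K] A)
    (β : V ≃ₗ[K] V) (ρ μ : A →ₗ[K] Module.End K V) (T : V →ₗ[K] A) : Prop :=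
  (∀ v, T (β v) = α (T v)) ∧
  ∀ u v, m (T u) (T v) = T (ρ (T (β.symm u)) v + μ (T (β.symm v)) u)

/-- A quadratic Hom-pre-Lie algebra. -/
def IsQuadraticHomPreLie (m : A →ₗ[K] A →ₗ[K] A) (α : A →ₗ[K] A)
    (ω : A →ₗ[K] A →ₗ[K] K) : Prop :=
  IsHomPreLie m α ∧
  (∀ x y, ω x y = - ω y x) ∧
  (∀ x, (∀ y, ω x y = 0) → x = 0) ∧
  (∀ x y, ω (α x) (α y) = ω x y) ∧
  ∀ x y z, ω (m x y) (α z) = - ω (α y) (m x z - m z x)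

/-- A Manin triple for Hom-pre-Lie algebras. -/
def IsManinTriple (m : A →ₗ[K] A →ₗ[K] A) (α : A →ₗ[K] A)
    (ω : A →ₗ[K] A →ₗ[K] K) (A1 A2 : Submodule K A) : Prop :=
  IsQuadraticHomPreLie m α ω ∧
  (∀ x ∈ A1, ∀ y ∈ A1, m x y ∈ A1) ∧ (∀ x ∈ A1, α x ∈ A1) ∧
  (∀ x ∈ A2, ∀ y ∈ A2, m x y ∈ A2) ∧ (∀ x ∈ A2, α x ∈ A2) ∧
  (∀ x ∈ A1, ∀ y ∈ A1, ω x y = 0) ∧ (∀ x ∈ A2, ∀ y ∈ A2, ω x y = 0) ∧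
  IsCompl A1 A2

/-- A Hessian structure on a Hom-pre-Lie algebra. -/
def IsHessian (m : A →ₗ[K] A →ₗ[K] A) (α : A →ₗ[K] A) (Bf : A →ₗ[K] A →ₗ[K] K) : Prop :=
  (∀ x y, Bf x y = Bf y x) ∧ (∀ x, (∀ y, Bf x y = 0) → x = 0) ∧
  (∀ x y, Bf (α x) (α y) = Bf x y) ∧
  ∀ x y z, Bf (m x y) (α z) - Bf (α x) (m y z) = Bf (m y x) (α z) - Bf (α y) (m x z)

end Basic

section Transpose
variable {X Y : Type*} [AddCommGroup X] [Module K X] [AddCommGroup Y] [Module K Y]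

/-- The transpose of linear maps, as a bundled linear map. -/
noncomputable def transposeH : (X →ₗ[K] Y) →ₗ[K] (Y →ₗ[K] K) →ₗ[K] (X →ₗ[K] K) :=
  (LinearMap.llcomp K X Y K).flip

@[simp] theorem transposeH_apply (f : X →ₗ[K] Y) (ξ : Y →ₗ[K] K) (x : X) :
    transposeH f ξ x = ξ (f x) := rfl

end Transpose

section StarOps
variable {A : Type*} [AddCommGroup A] [Module K A]

/-- The evaluation map into the double dual. -/
noncomputable def evalH : A →ₗ[K] ((A →ₗ[K] K) →ₗ[K] K) :=
  (LinearMap.id : (A →ₗ[K] K) →ₗ[K] (A →ₗ[K] K)).flip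

/-- The operator `L^⋆` : `⟨L^⋆_x ξ, y⟩ = -⟨ξ, α⁻¹(x) · α⁻²(y)⟩`. -/
noncomputable def Lstar (m : A →ₗ[K] A →ₗ[K] A) (α : A ≃ₗ[K] A) :
    A →ₗ[K] (A →ₗ[K] K) →ₗ[K] (A →ₗ[K] K) :=
  -(transposeH ∘ₗ
      (LinearMap.lcomp K A ((α ^ (-2 : ℤ) : A ≃ₗ[K] A) : A →ₗ[K] A)) ∘ₗ m ∘ₗ
      ((α⁻¹ : A ≃ₗ[K] A) : A →ₗ[K] A))

/-- The operator `R^⋆` : `⟨R^⋆_x ξ, y⟩ = -⟨ξ, α⁻²(y) · α⁻¹(x)⟩`. -/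
noncomputable def Rstar (m : A →ₗ[K] A →ₗ[K] A) (α : A ≃ₗ[K] A) :
    A →ₗ[K] (A →ₗ[K] K) →ₗ[K] (A →ₗ[K] K) :=
  -(transposeH ∘ₗ
      (LinearMap.lcomp K A ((α ^ (-2 : ℤ) : A ≃ₗ[K] A) : A →ₗ[K] A)) ∘ₗ m.flip ∘ₗ
      ((α⁻¹ : A ≃ₗ[K] A) : A →ₗ[K] A))

/-- The operator `ad^⋆ = L^⋆ - R^⋆`. -/
noncomputable def adStar (m : A →ₗ[K] A →ₗ[K] A) (α : A ≃ₗ[K] A) :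
    A →ₗ[K] (A →ₗ[K] K) →ₗ[K] (A →ₗ[K] K) :=
  Lstar m α - Rstar m α

variable [FiniteDimensional K A]

/-- The inverse of the double-dual evaluation isomorphism. -/
noncomputable def evalInvH : ((A →ₗ[K] K) →ₗ[K] K) →ₗ[K] A :=
  (Module.evalEquiv K A).symm.toLinearMap

/-- The operator `ℒ^⋆` : `⟨η, ℒ^⋆_ξ x⟩ = -⟨(α⁻¹)*(ξ) ∘ η, α²(x)⟩`. -/
noncomputable def Lcurly
    (mc : (A →ₗ[K] K) →ₗ[K] (A →ₗ[K] K) →ₗ[K] (A →ₗ[K] K))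
    (α : A ≃ₗ[K] A) : (A →ₗ[K] K) →ₗ[K] A →ₗ[K] A :=
  -((LinearMap.llcomp K A ((A →ₗ[K] K) →ₗ[K] K) A evalInvH) ∘ₗ
      (LinearMap.lcomp K ((A →ₗ[K] K) →ₗ[K] K)
        (evalH ∘ₗ ((α ^ (2 : ℤ) : A ≃ₗ[K] A) : A →ₗ[K] A))) ∘ₗ
      transposeH ∘ₗ mc ∘ₗ
      (transposeH ((α⁻¹ : A ≃ₗ[K] A) : A →ₗ[K] A)))

/-- The operator `ℛ^⋆` : `⟨η, ℛ^⋆_ξ x⟩ = -⟨η ∘ (α⁻¹)*(ξ), α²(x)⟩`. -/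
noncomputable def Rcurly
    (mc : (A →ₗ[K] K) →ₗ[K] (A →ₗ[K] K) →ₗ[K] (A →ₗ[K] K))
    (α : A ≃ₗ[K] A) : (A →ₗ[K] K) →ₗ[K] A →ₗ[K] A :=
  -((LinearMap.llcomp K A ((A →ₗ[K] K) →ₗ[K] K) A evalInvH) ∘ₗ
      (LinearMap.lcomp K ((A →ₗ[K] K) →ₗ[K] K)
        (evalH ∘ₗ ((α ^ (2 : ℤ) : A ≃ₗ[K] A) : A →ₗ[K] A))) ∘ₗ
      transposeH ∘ₗ mc.flip ∘ₗ
      (transposeH ((α⁻¹ : A ≃ₗ[K] A) : A →ₗ[K] A)))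

/-- The operator `𝔞𝔡^⋆ = ℒ^⋆ - ℛ^⋆`. -/
noncomputable def adCurly
    (mc : (A →ₗ[K] K) →ₗ[K] (A →ₗ[K] K) →ₗ[K] (A →ₗ[K] K))
    (α : A ≃ₗ[K] A) : (A →ₗ[K] K) →ₗ[K] A →ₗ[K] A :=
  Lcurly mc α - Rcurly mc α

end StarOps

section Tensor
variable {A : Type*} [AddCommGroup A] [Module K A]

/-- The pairing of `ξ ⊗ η` with elements of `A ⊗ A`. -/
noncomputable def tpair (ξ η : A →ₗ[K] K) : (A ⊗[K] A) →ₗ[K] K :=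
  (TensorProduct.lid K K).toLinearMap ∘ₗ TensorProduct.map ξ η

/-- The pairing of `x ⊗ y` with elements of `A* ⊗ A*`. -/
noncomputable def dpair (x y : A) : ((A →ₗ[K] K) ⊗[K] (A →ₗ[K] K)) →ₗ[K] K :=
  (TensorProduct.lid K K).toLinearMap ∘ₗ TensorProduct.map (evalH x) (evalH y)

/-- Pairing the first two tensor components of `A ⊗ A ⊗ A` with `ξ` and `η`. -/
noncomputable def pair12 (ξ η : A →ₗ[K] K) : (A ⊗[K] (A ⊗[K] A)) →ₗ[K] A :=
  (TensorProduct.lid K A).toLinearMap ∘ₗ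
    TensorProduct.map ξ ((TensorProduct.lid K A).toLinearMap ∘ₗ
      TensorProduct.map η LinearMap.id)

/-- The map `r^♯ : A* → A` associated to `r ∈ A ⊗ A`, `⟨r^♯(ξ), η⟩ = ⟨r, ξ ⊗ η⟩`. -/
noncomputable def rSharpL (r : A ⊗[K] A) : (A →ₗ[K] K) →ₗ[K] A :=
  ((LinearMap.llcomp K (A ⊗[K] A) (K ⊗[K] A) A (TensorProduct.lid K A).toLinearMap) ∘ₗ
    (LinearMap.rTensorHom A)).flip r

/-- The bilinear operation producing `[[r,r]]` out of `r ⊗ r`. -/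
noncomputable def homPreLieBB (m : A →ₗ[K] A →ₗ[K] A) (α : A →ₗ[K] A) :
    ((A ⊗[K] A) ⊗[K] (A ⊗[K] A)) →ₗ[K] (A ⊗[K] (A ⊗[K] A)) :=
  (TensorProduct.assoc K A A A).toLinearMap ∘ₗ
      (TensorProduct.map (TensorProduct.map α α) (TensorProduct.lift m)) ∘ₗ
      (TensorProduct.tensorTensorTensorComm K A A A A).toLinearMap
    - (TensorProduct.map α (TensorProduct.map (TensorProduct.lift (m.flip - m)) α)) ∘ₗ
      (LinearMap.lTensor A ((TensorProduct.assoc K A A A).symm.toLinearMap)) ∘ₗ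
      (TensorProduct.assoc K A A (A ⊗[K] A)).toLinearMap
    - (TensorProduct.map (TensorProduct.lift m)
        ((TensorProduct.map α α) ∘ₗ (TensorProduct.comm K A A).toLinearMap)) ∘ₗ
      (TensorProduct.tensorTensorTensorComm K A A A A).toLinearMap

/-- The element `[[r,r]] ∈ A ⊗ A ⊗ A`. -/
noncomputable def bracket2 (m : A →ₗ[K] A →ₗ[K] A) (α : A →ₗ[K] A) (r : A ⊗[K] A) :
    A ⊗[K] (A ⊗[K] A) :=
  homPreLieBB m α (r ⊗ₜ[K] r)

/-- A Hom-s-matrix in a Hom-pre-Lie algebra. -/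
def IsHomSMatrix {B : Type*} [AddCommGroup B] [Module K B]
    (mB : B →ₗ[K] B →ₗ[K] B) (γ : B ≃ₗ[K] B) (r : B ⊗[K] B) : Prop :=
  (TensorProduct.comm K B B) r = r ∧
  (∀ ξ, rSharpL r (ξ ∘ₗ ((γ⁻¹ : B ≃ₗ[K] B) : B →ₗ[K] B)) = γ (rSharpL r ξ)) ∧
  bracket2 mB (γ : B →ₗ[K] B) r = 0

/-- The representation `x ↦ F(x) ⊗ c + c ⊗ G(x)` on `Y ⊗ Y`. -/
noncomputable def tensorRep {Y : Type*} [AddCommGroup Y] [Module K Y]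
    (F G : A →ₗ[K] Y →ₗ[K] Y) (c : Y →ₗ[K] Y) :
    A →ₗ[K] Module.End K (Y ⊗[K] Y) :=
  (LinearMap.mulRight K (LinearMap.lTensor Y c)) ∘ₗ (LinearMap.rTensorHom Y) ∘ₗ F
    + (LinearMap.mulLeft K (LinearMap.rTensor Y c)) ∘ₗ (LinearMap.lTensorHom Y) ∘ₗ G

/-- The dual map `ρ^⋆` : `⟨ρ^⋆(x)ξ, u⟩ = -⟨(β⁻²)*(ξ), ρ(α(x))u⟩`. -/
noncomputable def rhoStar {V : Type*} [AddCommGroup V] [Module K V]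
    (α : A →ₗ[K] A) (β : V ≃ₗ[K] V) (ρ : A →ₗ[K] Module.End K V) :
    A →ₗ[K] (V →ₗ[K] K) →ₗ[K] (V →ₗ[K] K) :=
  -(transposeH ∘ₗ
      (LinearMap.mulLeft K (((β ^ (-2 : ℤ) : V ≃ₗ[K] V) : V →ₗ[K] V) : Module.End K V)) ∘ₗ
      ρ ∘ₗ α)

/-- The semidirect product Hom-pre-Lie product on `A × W`. -/
noncomputable def sdProduct {W : Type*} [AddCommGroup W] [Module K W]
    (m : A →ₗ[K] A →ₗ[K] A) (l r : A →ₗ[K] W →ₗ[K] W) :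
    (A × W) →ₗ[K] (A × W) →ₗ[K] (A × W) :=
  (m.compl₁₂ (LinearMap.fst K A W) (LinearMap.fst K A W)).compr₂ (LinearMap.inl K A W)
    + ((l.compl₁₂ (LinearMap.fst K A W) (LinearMap.snd K A W))
        + (r.compl₁₂ (LinearMap.fst K A W) (LinearMap.snd K A W)).flip).compr₂
      (LinearMap.inr K A W)

end Tensor

section Std
variable (K)
variable (A : Type*) [AddCommGroup A] [Module K A]

/-- The standard bilinear form `ω̄(x+ξ, y+η) = ⟨ξ,y⟩ - ⟨η,x⟩` on `A × A*`. -/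
noncomputable def stdOmega :
    (A × (A →ₗ[K] K)) →ₗ[K] (A × (A →ₗ[K] K)) →ₗ[K] K :=
  (LinearMap.id : (A →ₗ[K] K) →ₗ[K] (A →ₗ[K] K)).compl₁₂
      (LinearMap.snd K A (A →ₗ[K] K)) (LinearMap.fst K A (A →ₗ[K] K))
    - ((LinearMap.id : (A →ₗ[K] K) →ₗ[K] (A →ₗ[K] K)).compl₁₂
      (LinearMap.snd K A (A →ₗ[K] K)) (LinearMap.fst K A (A →ₗ[K] K))).flip

variable {K A}

/-- The standard product `⋄` on `A × A*`:
`(x+ξ) ⋄ (y+η) = x·y + 𝔞𝔡^⋆_ξ y - ℛ^⋆_η x + ξ∘η + ad^⋆_x η - R^⋆_y ξ`. -/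
noncomputable def stdDiamond [FiniteDimensional K A]
    (m : A →ₗ[K] A →ₗ[K] A) (α : A ≃ₗ[K] A)
    (mc : (A →ₗ[K] K) →ₗ[K] (A →ₗ[K] K) →ₗ[K] (A →ₗ[K] K)) :
    (A × (A →ₗ[K] K)) →ₗ[K] (A × (A →ₗ[K] K)) →ₗ[K] (A × (A →ₗ[K] K)) :=
  (m.compl₁₂ (LinearMap.fst K A (A →ₗ[K] K)) (LinearMap.fst K A (A →ₗ[K] K))
      + (adCurly mc α).compl₁₂ (LinearMap.snd K A (A →ₗ[K] K)) (LinearMap.fst K A (A →ₗ[K] K))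
      - ((Rcurly mc α).compl₁₂ (LinearMap.snd K A (A →ₗ[K] K))
          (LinearMap.fst K A (A →ₗ[K] K))).flip).compr₂
      (LinearMap.inl K A (A →ₗ[K] K))
    + (mc.compl₁₂ (LinearMap.snd K A (A →ₗ[K] K)) (LinearMap.snd K A (A →ₗ[K] K))
      + (adStar m α).compl₁₂ (LinearMap.fst K A (A →ₗ[K] K)) (LinearMap.snd K A (A →ₗ[K] K))
      - ((Rstar m α).compl₁₂ (LinearMap.fst K A (A →ₗ[K] K))
          (LinearMap.snd K A (A →ₗ[K] K))).flip).compr₂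
      (LinearMap.inr K A (A →ₗ[K] K))

end Std

section Bialg
variable {A : Type*} [AddCommGroup A] [Module K A]

/-- A Hom-pre-Lie bialgebra: the two 1-cocycle conditions on the
comultiplications `φ*` and `ψ*`. -/
def IsHomPreLieBialgebra (m : A →ₗ[K] A →ₗ[K] A) (α : A ≃ₗ[K] A)
    (mc : (A →ₗ[K] K) →ₗ[K] (A →ₗ[K] K) →ₗ[K] (A →ₗ[K] K))
    (φs : A →ₗ[K] A ⊗[K] A)
    (ψs : (A →ₗ[K] K) →ₗ[K] (A →ₗ[K] K) ⊗[K] (A →ₗ[K] K)) : Prop :=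
  IsHomLieCocycle (m - m.flip) (α : A →ₗ[K] A)
    (tensorRep (m ∘ₗ ((α ^ (-2 : ℤ) : A ≃ₗ[K] A) : A →ₗ[K] A))
      ((m - m.flip) ∘ₗ ((α ^ (-2 : ℤ) : A ≃ₗ[K] A) : A →ₗ[K] A))
      (α : A →ₗ[K] A)) φs ∧
  IsHomLieCocycle (mc - mc.flip) (transposeH ((α⁻¹ : A ≃ₗ[K] A) : A →ₗ[K] A))
    (tensorRep (mc ∘ₗ transposeH ((α ^ (2 : ℤ) : A ≃ₗ[K] A) : A →ₗ[K] A))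
      ((mc - mc.flip) ∘ₗ transposeH ((α ^ (2 : ℤ) : A ≃ₗ[K] A) : A →ₗ[K] A))
      (transposeH ((α⁻¹ : A ≃ₗ[K] A) : A →ₗ[K] A))) ψs

end Bialg

end Defs

section Aux
variable {K : Type*} [Field K] {A : Type*} [AddCommGroup A] [Module K A]

noncomputable def tpair' {V W : Type*} [AddCommGroup V] [Module K V] [AddCommGroup W] [Module K W]
    (ξ : V →ₗ[K] K) (η : W →ₗ[K] K) : (V ⊗[K] W) →ₗ[K] K :=
  (TensorProduct.lid K K).toLinearMap ∘ₗ TensorProduct.map ξ η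

@[simp] lemma tpair'_tmul {V W : Type*} [AddCommGroup V] [Module K V] [AddCommGroup W] [Module K W]
    (ξ : V →ₗ[K] K) (η : W →ₗ[K] K) (x : V) (y : W) :
    tpair' ξ η (x ⊗ₜ[K] y) = ξ x * η y := by
  simp [tpair']

lemma sep2 {V W : Type*} [AddCommGroup V] [Module K V] [AddCommGroup W] [Module K W]
    (t : V ⊗[K] W) (h : ∀ (f : V →ₗ[K] K) (g : W →ₗ[K] K), tpair' f g t = 0) : t = 0 := by
  let b := Basis.ofVectorSpace K V
  let c := Basis.ofVectorSpace K W
  have key : ∀ (i : _) (j : _), (b.tensorProduct c).repr t (i, j) = 0 := by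
    intro i j
    have hcoord : ∀ u : V ⊗[K] W,
        tpair' (b.coord i) (c.coord j) u = (b.tensorProduct c).repr u (i, j) := by
      intro u
      induction u using TensorProduct.induction_on with
      | zero => simp
      | tmul x y => simp [Basis.tensorProduct_repr_tmul_apply, Basis.coord_apply, mul_comm]
      | add x y hx hy => simp [hx, hy]
    rw [← hcoord, h]
  have : (b.tensorProduct c).repr t = 0 := by
    ext ij
    obtain ⟨i, j⟩ := ij
    simpa using key i j
  simpa using congrArg ((b.tensorProduct c).repr.symm) this

end Aux
section Aux
variable {K : Type*} [Field K] {A : Type*} [AddCommGroup A] [Module K A]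

lemma sub_apply_H {W X Y : Type*} [AddCommGroup W] [Module K W]
    [AddCommGroup X] [Module K X] [AddCommGroup Y] [Module K Y]
    (f g : W →ₗ[K] X →ₗ[K] Y →ₗ[K] K) (w : W) : (f - g) w = f w - g w := rfl

lemma zpm2_apply (α : A ≃ₗ[K] A) (z : A) :
    ((α ^ (-2 : ℤ) : A ≃ₗ[K] A) : A →ₗ[K] A) z = α.symm (α.symm z) := by
  rw [zpow_neg]; rfl

lemma zp2_apply (α : A ≃ₗ[K] A) (z : A) :
    ((α ^ (2 : ℤ) : A ≃ₗ[K] A) : A →ₗ[K] A) z = α (α z) := by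
  norm_num; rfl

lemma Lstar_apply (m : A →ₗ[K] A →ₗ[K] A) (α : A ≃ₗ[K] A) (x : A) (ξ : A →ₗ[K] K) (y : A) :
    Lstar m α x ξ y = -(ξ (m (α.symm x) (α.symm (α.symm y)))) := by
  simp [Lstar, zpm2_apply]
  rfl

lemma Rstar_apply (m : A →ₗ[K] A →ₗ[K] A) (α : A ≃ₗ[K] A) (x : A) (ξ : A →ₗ[K] K) (y : A) :
    Rstar m α x ξ y = -(ξ (m (α.symm (α.symm y)) (α.symm x))) := by
  simp [Rstar, zpm2_apply]
  rfl

end Aux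
section Aux2
variable {K : Type*} [Field K] {A : Type*} [AddCommGroup A] [Module K A]

@[simp] lemma rSharpL_tmul (a b : A) (ξ : A →ₗ[K] K) :
    rSharpL (a ⊗ₜ[K] b) ξ = ξ a • b := by
  simp [rSharpL]

@[simp] lemma rSharpL_add (u v : A ⊗[K] A) (ξ : A →ₗ[K] K) :
    rSharpL (u + v) ξ = rSharpL u ξ + rSharpL v ξ := by
  simp [rSharpL]

@[simp] lemma rSharpL_zero (ξ : A →ₗ[K] K) :
    rSharpL (0 : A ⊗[K] A) ξ = 0 := by
  simp [rSharpL]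

@[simp] lemma tpair_tmul (ξ η : A →ₗ[K] K) (a b : A) :
    tpair ξ η (a ⊗ₜ[K] b) = ξ a * η b := by
  simp [tpair]

lemma tpair_rSharp (ξ η : A →ₗ[K] K) (u : A ⊗[K] A) :
    tpair ξ η u = η (rSharpL u ξ) := by
  induction u using TensorProduct.induction_on with
  | zero => simp
  | tmul a b => simp
  | add x y hx hy => simp [map_add, hx, hy]

lemma tpair_comm (ξ η : A →ₗ[K] K) (u : A ⊗[K] A) :
    tpair ξ η ((TensorProduct.comm K A A) u) = tpair η ξ u := by
  induction u using TensorProduct.induction_on with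
  | zero => simp
  | tmul a b => simp [mul_comm]
  | add x y hx hy => simp [map_add, hx, hy]

lemma tpair_map (ξ η : A →ₗ[K] K) (f g : A →ₗ[K] A) (t : A ⊗[K] A) :
    tpair ξ η (TensorProduct.map f g t) = tpair (ξ ∘ₗ f) (η ∘ₗ g) t := by
  induction t using TensorProduct.induction_on with
  | zero => simp
  | tmul a b => simp
  | add x y hx hy => simp [map_add, hx, hy]

lemma tensorRep_eq {Y : Type*} [AddCommGroup Y] [Module K Y]
    (F G : A →ₗ[K] Y →ₗ[K] Y) (c : Y →ₗ[K] Y) (x : A) (t : Y ⊗[K] Y) :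
    tensorRep F G c x t = TensorProduct.map (F x) c t + TensorProduct.map c (G x) t := by
  induction t using TensorProduct.induction_on with
  | zero => simp
  | tmul a b => rfl
  | add u v hu hv => simp only [map_add, hu, hv]; abel

@[simp] lemma evalH_apply (x : A) (ξ : A →ₗ[K] K) : evalH x ξ = ξ x := rfl

lemma dpair_eq (x y : A) (t : (A →ₗ[K] K) ⊗[K] (A →ₗ[K] K)) :
    dpair x y t = tpair' (K := K) (evalH x) (evalH y) t := rfl

lemma dpair_map (x y : A) (f g : (A →ₗ[K] K) →ₗ[K] (A →ₗ[K] K))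
    (t : (A →ₗ[K] K) ⊗[K] (A →ₗ[K] K)) :
    dpair x y (TensorProduct.map f g t) =
      tpair' (K := K) ((evalH x) ∘ₗ f) ((evalH y) ∘ₗ g) t := by
  induction t using TensorProduct.induction_on with
  | zero => simp [dpair_eq]
  | tmul a b => simp [dpair_eq, dpair]
  | add u v hu hv => simp only [map_add, hu, hv]

end Aux2
section Aux3
variable {K : Type*} [Field K] {A : Type*} [AddCommGroup A] [Module K A]

@[simp] lemma pair12_tmul (ξ η : A →ₗ[K] K) (x y z : A) :
    pair12 ξ η (x ⊗ₜ[K] (y ⊗ₜ[K] z)) = ξ x • (η y • z) := by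
  simp [pair12]
  rw [smul_comm]

lemma BBpair (m : A →ₗ[K] A →ₗ[K] A) (α : A ≃ₗ[K] A) (ξ η ζ : A →ₗ[K] K)
    (u v : A ⊗[K] A) :
    ζ (pair12 ξ η (homPreLieBB m (α : A →ₗ[K] A) (u ⊗ₜ[K] v))) =
      ζ (m (rSharpL u (ξ ∘ₗ (α : A →ₗ[K] A))) (rSharpL v (η ∘ₗ (α : A →ₗ[K] A))))
      - η (m (rSharpL ((TensorProduct.comm K A A) v) (ζ ∘ₗ (α : A →ₗ[K] A)))
            (rSharpL u (ξ ∘ₗ (α : A →ₗ[K] A))))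
      + η (m (rSharpL u (ξ ∘ₗ (α : A →ₗ[K] A)))
            (rSharpL ((TensorProduct.comm K A A) v) (ζ ∘ₗ (α : A →ₗ[K] A))))
      - ξ (m (rSharpL ((TensorProduct.comm K A A) u) (ζ ∘ₗ (α : A →ₗ[K] A)))
            (rSharpL ((TensorProduct.comm K A A) v) (η ∘ₗ (α : A →ₗ[K] A)))) := by
  induction u using TensorProduct.induction_on with
  | zero => simp [map_zero]
  | add u₁ u₂ h₁ h₂ =>
      rw [add_tmul]
      simp only [map_add, rSharpL_add, LinearMap.add_apply, LinearMap.map_add]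
      rw [h₁, h₂]; ring
  | tmul a b =>
      induction v using TensorProduct.induction_on with
      | zero => simp [map_zero]
      | add v₁ v₂ h₁ h₂ =>
          rw [tmul_add]
          simp only [map_add, rSharpL_add, LinearMap.add_apply, LinearMap.map_add]
          rw [h₁, h₂]; ring
      | tmul c d =>
          simp [homPreLieBB, TensorProduct.tensorTensorTensorComm_tmul, mul_comm,
            mul_left_comm, mul_assoc]
          ring

end Aux3
universe u v
set_option maxHeartbeats 1000000

theorem stmt_9 {K : Type*} [Field K] {A : Type*} [AddCommGroup A] [Module K A]
    [FiniteDimensional K A]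
    (m : A →ₗ[K] A →ₗ[K] A) (α : A ≃ₗ[K] A)
    (h : IsHomPreLie m (α : A →ₗ[K] A))
    (r : A ⊗[K] A)
    (hs : IsHomSMatrix m α r)
    (mc : (A →ₗ[K] K) →ₗ[K] (A →ₗ[K] K) →ₗ[K] (A →ₗ[K] K))
    (hmc : mc = (adStar m α) ∘ₗ rSharpL r - ((Rstar m α) ∘ₗ rSharpL r).flip)
    (φs : A →ₗ[K] A ⊗[K] A)
    (hφ : ∀ (x : A) (ξ η : (A →ₗ[K] K)), tpair ξ η (φs x) = mc ξ η x)
    (ψs : (A →ₗ[K] K) →ₗ[K] (A →ₗ[K] K) ⊗[K] (A →ₗ[K] K))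
    (hψ : ∀ (ξ : (A →ₗ[K] K)) (x y : A), dpair x y (ψs ξ) = ξ (m x y)) :
    IsHomPreLie mc (transposeH ((α⁻¹ : A ≃ₗ[K] A) : A →ₗ[K] A)) ∧ IsHomPreLieBialgebra m α mc φs ψs := by
  classical
  set S : (A →ₗ[K] K) →ₗ[K] A := rSharpL r with hSdef
  -- basic algebra facts
  have hH : ∀ x y : A, α (m x y) = m (α x) (α y) := by
    intro x y; simpa using h.1 x y
  have hHs : ∀ x y : A, α.symm (m x y) = m (α.symm x) (α.symm y) := by
    intro x y
    apply α.injective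
    rw [hH]; simp
  have hP : ∀ x y z : A, m (m x y) (α z) - m (α x) (m y z)
      = m (m y x) (α z) - m (α y) (m x z) := by
    intro x y z; simpa using h.2 x y z
  -- symmetry of r
  have hS : ∀ ξ η : A →ₗ[K] K, η (S ξ) = ξ (S η) := by
    intro ξ η
    rw [hSdef]
    calc η (rSharpL r ξ) = tpair ξ η r := (tpair_rSharp ξ η r).symm
      _ = tpair ξ η ((TensorProduct.comm K A A) r) := by rw [hs.1]
      _ = tpair η ξ r := tpair_comm ξ η r
      _ = ξ (rSharpL r η) := tpair_rSharp η ξ r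
  -- α-compatibility
  have hAinv : ∀ ξ : A →ₗ[K] K, S (ξ ∘ₗ ((α⁻¹ : A ≃ₗ[K] A) : A →ₗ[K] A)) = α (S ξ) :=
    hs.2.1
  have hA1 : ∀ ξ : A →ₗ[K] K, S (ξ ∘ₗ (α : A →ₗ[K] A)) = α.symm (S ξ) := by
    intro ξ
    have h1 := hAinv (ξ ∘ₗ (α : A →ₗ[K] A))
    have h2 : (ξ ∘ₗ (α : A →ₗ[K] A)) ∘ₗ ((α⁻¹ : A ≃ₗ[K] A) : A →ₗ[K] A) = ξ := by
      ext z; simp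
    rw [h2] at h1
    apply α.injective
    rw [h1]; simp
  -- pointwise formula for mc
  have hmcA : ∀ (ξ η : A →ₗ[K] K) (z : A),
      mc ξ η z = η (m (α.symm (α.symm z)) (α.symm (S ξ)))
        - η (m (α.symm (S ξ)) (α.symm (α.symm z)))
        + ξ (m (α.symm (α.symm z)) (α.symm (S η))) := by
    intro ξ η z
    rw [hmc]
    simp [sub_apply_H, adStar, Lstar_apply, Rstar_apply, hSdef]
    ring
  -- the s-matrix equation, scalar form
  have hRR : ∀ ξ η ζ : A →ₗ[K] K,
      (0:K) = ζ (m (α.symm (S ξ)) (α.symm (S η)))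
        - η (m (α.symm (S ζ)) (α.symm (S ξ)))
        + η (m (α.symm (S ξ)) (α.symm (S ζ)))
        - ξ (m (α.symm (S ζ)) (α.symm (S η))) := by
    intro ξ η ζ
    have key := BBpair m α ξ η ζ r r
    rw [hs.1] at key
    have h0 : homPreLieBB m ((α : A →ₗ[K] A)) (r ⊗ₜ[K] r) = 0 := hs.2.2
    rw [h0] at key
    simp only [map_zero] at key
    rw [key, ← hSdef, hA1 ξ, hA1 η, hA1 ζ]
  -- S is multiplicative: S (mc ξ η) = m (S ξ) (S η)
  have hO : ∀ ξ η : A →ₗ[K] K, S (mc ξ η) = m (S ξ) (S η) := by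
    intro ξ η
    rw [← sub_eq_zero]
    rw [← Module.forall_dual_apply_eq_zero_iff K]
    intro μ
    rw [map_sub, hS (mc ξ η) μ]
    rw [hmcA]
    have key := hRR ξ η (μ ∘ₗ (α : A →ₗ[K] A))
    rw [hA1 μ] at key
    simp only [LinearMap.comp_apply, LinearEquiv.coe_coe] at key
    rw [hH, α.apply_symm_apply, α.apply_symm_apply] at key
    linear_combination key
  -- helpers for transposeH
  have hT : ∀ (f : A →ₗ[K] A) (ξ : A →ₗ[K] K), transposeH f ξ = ξ ∘ₗ f := fun _ _ => rfl
  have hic : ∀ z : A, ((α⁻¹ : A ≃ₗ[K] A) : A →ₗ[K] A) z = α.symm z := fun _ => rfl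
  refine ⟨⟨?_, ?_⟩, ?_, ?_⟩
  · -- multiplicativity of mc w.r.t. (α⁻¹)*
    intro ξ η
    apply LinearMap.ext; intro z
    rw [transposeH_apply]
    rw [hT _ ξ, hT _ η]
    rw [hmcA, hmcA, hAinv ξ, hAinv η]
    simp only [hic, LinearMap.comp_apply, LinearEquiv.coe_coe, hHs,
      LinearEquiv.symm_apply_apply]
  · -- Hom-pre-Lie identity for mc
    intro ξ η ζ
    apply LinearMap.ext; intro z
    simp only [LinearMap.sub_apply]
    rw [hT _ ξ, hT _ η, hT _ ζ]
    simp only [hmcA, map_sub, map_add, hO, hAinv, LinearMap.comp_apply,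
      LinearEquiv.coe_coe, hic, hHs, LinearEquiv.symm_apply_apply,
      LinearEquiv.apply_symm_apply]
    have q1 := congrArg ζ (hP (α.symm (α.symm (S ξ))) (α.symm (α.symm (S η))) (α.symm (α.symm (α.symm (α.symm z)))))
    have q2 := congrArg ζ (hP (α.symm (α.symm (α.symm (α.symm z)))) (α.symm (α.symm (S ξ))) (α.symm (α.symm (S η))))
    have q3 := congrArg ζ (hP (α.symm (α.symm (S η))) (α.symm (α.symm (α.symm (α.symm z)))) (α.symm (α.symm (S ξ))))
    have q4 := congrArg η (hP (α.symm (α.symm (α.symm (α.symm z)))) (α.symm (α.symm (S ξ))) (α.symm (α.symm (S ζ))))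
    have q5 := congrArg ξ (hP (α.symm (α.symm (α.symm (α.symm z)))) (α.symm (α.symm (S η))) (α.symm (α.symm (S ζ))))
    simp only [map_sub, LinearEquiv.apply_symm_apply] at q1 q2 q3 q4 q5
    linear_combination -q1 - q2 - q3 - q4 + q5
  · -- first cocycle (φs)
    have hsepT : ∀ t : A ⊗[K] A, (∀ ξ η : A →ₗ[K] K, tpair ξ η t = 0) → t = 0 := by
      intro t ht; exact sep2 t ht
    have hΦ : ∀ w : A, φs w
        = tensorRep (m ∘ₗ ((α ^ (-2:ℤ) : A ≃ₗ[K] A) : A →ₗ[K] A))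
            ((m - m.flip) ∘ₗ ((α ^ (-2:ℤ) : A ≃ₗ[K] A) : A →ₗ[K] A)) (α : A →ₗ[K] A) w r := by
      intro w
      rw [← sub_eq_zero]; apply hsepT; intro ξ η
      rw [map_sub, hφ, tensorRep_eq, map_add, tpair_map, tpair_map]
      rw [tpair_rSharp, tpair_rSharp, ← hSdef]
      rw [hS (ξ ∘ₗ ((m ∘ₗ ((α ^ (-2:ℤ) : A ≃ₗ[K] A) : A →ₗ[K] A)) w)) (η ∘ₗ (α : A →ₗ[K] A))]
      rw [hA1 η, hA1 ξ]
      rw [hmcA]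
      simp only [LinearMap.comp_apply, LinearEquiv.coe_coe, zpm2_apply,
        LinearMap.sub_apply, LinearMap.flip_apply, map_sub]
      ring
    have hB : TensorProduct.map (α : A →ₗ[K] A) (α : A →ₗ[K] A) r = r := by
      rw [← sub_eq_zero]; apply hsepT; intro ξ η
      rw [map_sub, tpair_map, tpair_rSharp, tpair_rSharp, ← hSdef, hA1 ξ]
      simp only [LinearMap.comp_apply, LinearEquiv.coe_coe,
        LinearEquiv.apply_symm_apply, sub_self]
    have hC : ∀ (x y : A) (t : A ⊗[K] A),
        tensorRep (m ∘ₗ ((α ^ (-2:ℤ) : A ≃ₗ[K] A) : A →ₗ[K] A))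
            ((m - m.flip) ∘ₗ ((α ^ (-2:ℤ) : A ≃ₗ[K] A) : A →ₗ[K] A)) (α : A →ₗ[K] A)
            (m x y - m y x) (TensorProduct.map (α : A →ₗ[K] A) (α : A →ₗ[K] A) t)
          = tensorRep (m ∘ₗ ((α ^ (-2:ℤ) : A ≃ₗ[K] A) : A →ₗ[K] A))
              ((m - m.flip) ∘ₗ ((α ^ (-2:ℤ) : A ≃ₗ[K] A) : A →ₗ[K] A)) (α : A →ₗ[K] A)
              ((α : A →ₗ[K] A) x)
              (tensorRep (m ∘ₗ ((α ^ (-2:ℤ) : A ≃ₗ[K] A) : A →ₗ[K] A))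
                ((m - m.flip) ∘ₗ ((α ^ (-2:ℤ) : A ≃ₗ[K] A) : A →ₗ[K] A)) (α : A →ₗ[K] A) y t)
            - tensorRep (m ∘ₗ ((α ^ (-2:ℤ) : A ≃ₗ[K] A) : A →ₗ[K] A))
              ((m - m.flip) ∘ₗ ((α ^ (-2:ℤ) : A ≃ₗ[K] A) : A →ₗ[K] A)) (α : A →ₗ[K] A)
              ((α : A →ₗ[K] A) y)
              (tensorRep (m ∘ₗ ((α ^ (-2:ℤ) : A ≃ₗ[K] A) : A →ₗ[K] A))
                ((m - m.flip) ∘ₗ ((α ^ (-2:ℤ) : A ≃ₗ[K] A) : A →ₗ[K] A)) (α : A →ₗ[K] A) x t) := by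
      intro x y t
      induction t using TensorProduct.induction_on with
      | zero => simp
      | add t₁ t₂ h₁ h₂ =>
          simp only [map_add]
          rw [h₁, h₂]
          abel
      | tmul u v =>
          rw [← sub_eq_zero, ← Module.forall_dual_apply_eq_zero_iff K]
          intro θ
          simp only [tensorRep_eq, TensorProduct.map_tmul, LinearMap.comp_apply,
            LinearEquiv.coe_coe, zpm2_apply, LinearMap.sub_apply, LinearMap.flip_apply,
            map_sub, map_add, hHs, hH, LinearEquiv.apply_symm_apply,
            LinearEquiv.symm_apply_apply, TensorProduct.sub_tmul, TensorProduct.tmul_sub,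
            TensorProduct.map_tmul]
          have w1 := congrArg (fun a => θ (a ⊗ₜ[K] (α (α v))))
            (hP (α.symm (α.symm x)) (α.symm (α.symm y)) u)
          have w2 := congrArg (fun a => θ ((α (α u)) ⊗ₜ[K] a))
            (hP (α.symm (α.symm x)) (α.symm (α.symm y)) v)
          have w3 := congrArg (fun a => θ ((α (α u)) ⊗ₜ[K] a))
            (hP (α.symm (α.symm y)) v (α.symm (α.symm x)))
          have w4 := congrArg (fun a => θ ((α (α u)) ⊗ₜ[K] a))
            (hP v (α.symm (α.symm x)) (α.symm (α.symm y)))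
          simp only [LinearEquiv.apply_symm_apply, TensorProduct.sub_tmul,
            TensorProduct.tmul_sub, map_sub] at w1 w2 w3 w4
          linear_combination w1 + w2 + w3 + w4
    intro x y
    have e := hC x y r
    rw [hB] at e
    simp only [LinearMap.sub_apply, LinearMap.flip_apply]
    rw [hΦ (m x y - m y x), hΦ y, hΦ x]
    exact e
  · -- second cocycle (ψs)
    have hsepD : ∀ t : (A →ₗ[K] K) ⊗[K] (A →ₗ[K] K), (∀ x y : A, dpair x y t = 0) → t = 0 := by
      intro t ht
      apply sep2
      intro f g
      have hf : evalH (K := K) ((Module.evalEquiv K A).symm f) = f := by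
        ext ξ; simp
      have hg : evalH (K := K) ((Module.evalEquiv K A).symm g) = g := by
        ext ξ; simp
      rw [← hf, ← hg]
      exact ht _ _
    have hcomp : ∀ ξ : A →ₗ[K] K,
        transposeH ((α ^ (2:ℤ) : A ≃ₗ[K] A) : A →ₗ[K] A)
          (transposeH ((α⁻¹ : A ≃ₗ[K] A) : A →ₗ[K] A) ξ) = ξ ∘ₗ (α : A →ₗ[K] A) := by
      intro ξ; rw [hT, hT]; ext z
      simp only [LinearMap.comp_apply, zp2_apply, hic, LinearEquiv.coe_coe,
        LinearEquiv.symm_apply_apply]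
    have hWc : ∀ (ξ : A →ₗ[K] K) (x : A),
        (evalH (K := K) x) ∘ₗ (mc (ξ ∘ₗ (α : A →ₗ[K] A)))
          = evalH (m (α.symm (α.symm x)) (α.symm (α.symm (S ξ)))
              - m (α.symm (α.symm (S ξ))) (α.symm (α.symm x))
              + S (ξ ∘ₗ m (α.symm x))) := by
      intro ξ x
      ext μ
      simp only [LinearMap.comp_apply, evalH_apply]
      rw [hmcA, hA1 ξ]
      have h3 : (ξ ∘ₗ (α : A →ₗ[K] A)) (m (α.symm (α.symm x)) (α.symm (S μ)))
          = μ (S (ξ ∘ₗ m (α.symm x))) := by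
        rw [hS (ξ ∘ₗ m (α.symm x)) μ]
        simp only [LinearMap.comp_apply, LinearEquiv.coe_coe]
        rw [hH]
        simp only [LinearEquiv.apply_symm_apply]
      rw [h3]
      simp only [map_add, map_sub]
    have hUc : ∀ (ξ : A →ₗ[K] K) (y : A),
        (evalH (K := K) y) ∘ₗ ((mc - mc.flip) (ξ ∘ₗ (α : A →ₗ[K] A)))
          = evalH (S (ξ ∘ₗ (m.flip (α.symm y)))
              - m (α.symm (α.symm (S ξ))) (α.symm (α.symm y))) := by
      intro ξ y
      ext μ
      simp only [LinearMap.comp_apply, evalH_apply, sub_apply_H, LinearMap.sub_apply,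
        LinearMap.flip_apply]
      rw [hmcA, hmcA, hA1 ξ]
      have h3 : (ξ ∘ₗ (α : A →ₗ[K] A)) (m (α.symm (α.symm y)) (α.symm (S μ)))
          = μ (S (ξ ∘ₗ m (α.symm y))) := by
        rw [hS (ξ ∘ₗ m (α.symm y)) μ]
        simp only [LinearMap.comp_apply, LinearEquiv.coe_coe]
        rw [hH]
        simp only [LinearEquiv.apply_symm_apply]
      have h4 : (ξ ∘ₗ (α : A →ₗ[K] A)) (m (α.symm (S μ)) (α.symm (α.symm y)))
          = μ (S (ξ ∘ₗ m.flip (α.symm y))) := by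
        rw [hS (ξ ∘ₗ m.flip (α.symm y)) μ]
        simp only [LinearMap.comp_apply, LinearEquiv.coe_coe, LinearMap.flip_apply]
        rw [hH]
        simp only [LinearEquiv.apply_symm_apply]
      rw [h3, h4]
      simp only [map_add, map_sub]
      ring
    intro ξ η
    rw [← sub_eq_zero]
    apply hsepD
    intro x y
    rw [map_sub]
    rw [hψ]
    simp only [sub_apply_H, LinearMap.sub_apply, map_sub, LinearMap.flip_apply]
    simp only [tensorRep_eq]
    simp only [LinearMap.comp_apply]
    have hW' : ∀ (χ : A →ₗ[K] K) (x : A),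
        (evalH (K := K) x) ∘ₗ (mc (transposeH ((α ^ (2:ℤ) : A ≃ₗ[K] A) : A →ₗ[K] A)
          ((transposeH ((α⁻¹ : A ≃ₗ[K] A) : A →ₗ[K] A)) χ)))
          = evalH (m (α.symm (α.symm x)) (α.symm (α.symm (S χ)))
              - m (α.symm (α.symm (S χ))) (α.symm (α.symm x))
              + S (χ ∘ₗ m (α.symm x))) := by
      intro χ x; rw [hcomp χ]; exact hWc χ x
    have hU' : ∀ (χ : A →ₗ[K] K) (y : A),
        (evalH (K := K) y) ∘ₗ ((mc - mc.flip) (transposeH ((α ^ (2:ℤ) : A ≃ₗ[K] A) : A →ₗ[K] A)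
          ((transposeH ((α⁻¹ : A ≃ₗ[K] A) : A →ₗ[K] A)) χ)))
          = evalH (S (χ ∘ₗ (m.flip (α.symm y)))
              - m (α.symm (α.symm (S χ))) (α.symm (α.symm y))) := by
      intro χ y; rw [hcomp χ]; exact hUc χ y
    simp only [map_add]
    rw [dpair_map, dpair_map, dpair_map, dpair_map]
    rw [hW' ξ x, hW' η x, hU' ξ y, hU' η y]
    have hyc : (evalH (K := K) y) ∘ₗ (transposeH ((α⁻¹ : A ≃ₗ[K] A) : A →ₗ[K] A))
        = evalH (α.symm y) := rfl
    have hxc : (evalH (K := K) x) ∘ₗ (transposeH ((α⁻¹ : A ≃ₗ[K] A) : A →ₗ[K] A))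
        = evalH (α.symm x) := rfl
    rw [hyc, hxc]
    have hd : ∀ (a b : A) (t : (A →ₗ[K] K) ⊗[K] (A →ₗ[K] K)),
        tpair' (K := K) (evalH a) (evalH b) t = dpair a b t := fun _ _ _ => rfl
    rw [hd, hd, hd, hd]
    simp only [hψ]
    -- now a scalar identity
    simp only [hmcA]
    simp only [map_add, map_sub, LinearMap.add_apply, LinearMap.sub_apply,
      hHs, LinearEquiv.apply_symm_apply]
    have f1 := hS (ξ ∘ₗ m (α.symm x)) (η ∘ₗ m.flip (α.symm y))
    have f2 := hS (η ∘ₗ m (α.symm x)) (ξ ∘ₗ m.flip (α.symm y))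
    simp only [LinearMap.comp_apply, LinearMap.flip_apply] at f1 f2
    have q1 := congrArg η (hP (α.symm (α.symm x)) (α.symm (α.symm (S ξ))) (α.symm (α.symm y)))
    have q2 := congrArg ξ (hP (α.symm (α.symm x)) (α.symm (α.symm (S η))) (α.symm (α.symm y)))
    simp only [map_sub, LinearEquiv.apply_symm_apply] at q1 q2
    linear_combination -f1 + f2 - q1 + q2
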